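/- arXiv:2108.05194 — 2 statements merged into one kernel-verified Lean document; each statement's English description precedes it below -/
import Mathlib

section
/- Let (X,Gₙ) be a complete generalized n-metric space and T : X → X satisfy Gₙ(Tx₁,...,Txₙ) ≤ k·Gₙ(x₁,...,xₙ) for all x₁,...,xₙ with some k ∈ [0,1). Then for any y₀ ∈ X, the iterate sequence y_m = T^m y₀ is Gₙ-Cauchy, and in fact Gₙ(y_m, y_p, ..., y_p) ≤ (kᵐ/(1−k))·Gₙ(y₀, y₁, ..., y₁) for all p > m. -/
open Filter Topology

/-- The tuple `(x, y, y, ..., y)` of length `n`. -/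
def tailRep {X : Type*} (n : ℕ) (x y : X) : Fin n → X := fun i => if (i : ℕ) = 0 then x else y

/-- The tuple `(x, x, ..., x, y)` of length `n`. -/
def headRep {X : Type*} (n : ℕ) (x y : X) : Fin n → X := fun i => if (i : ℕ) + 1 = n then y else x

/-- `G` is a generalized `n`-metric on `X`. -/
structure IsGenNMetric {X : Type*} (n : ℕ) (hn : 3 ≤ n) (G : (Fin n → X) → ℝ) : Prop where
  nonneg : ∀ f, 0 ≤ G f
  g1 : ∀ x : X, G (fun _ => x) = 0
  g2 : ∀ x y : X, x ≠ y → 0 < G (headRep n x y)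
  g3 : ∀ f : Fin n → X, (∃ i j : Fin n, (i : ℕ) ≠ 0 ∧ (j : ℕ) ≠ 0 ∧ f i ≠ f j) →
      G (headRep n (f ⟨0, by omega⟩) (f ⟨1, by omega⟩)) ≤ G f
  g4 : ∀ (f : Fin n → X) (π : Equiv.Perm (Fin n)), G (f ∘ π) = G f
  g5 : ∀ (f : Fin n → X) (w : X),
      G f ≤ G (tailRep n (f ⟨0, by omega⟩) w) + G (Function.update f ⟨0, by omega⟩ w)

/-- The metric associated to a generalized `n`-metric. -/
def dG {X : Type*} (n : ℕ) (G : (Fin n → X) → ℝ) (x y : X) : ℝ :=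
  G (tailRep n x y) + G (headRep n x y)

/-- A sequence is `Gₙ`-Cauchy. -/
def IsGCauchy {X : Type*} (n : ℕ) (G : (Fin n → X) → ℝ) (x : ℕ → X) : Prop :=
  ∀ ε > (0 : ℝ), ∃ N : ℕ, ∀ k : Fin n → ℕ, (∀ i, N ≤ k i) → G (fun i => x (k i)) < ε

/-- A sequence `Gₙ`-converges to `l`. -/
def GTendsto {X : Type*} (n : ℕ) (G : (Fin n → X) → ℝ) (x : ℕ → X) (l : X) : Prop :=
  Tendsto (fun m => G (tailRep n (x m) l)) atTop (nhds 0)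

/-- `(X, Gₙ)` is complete. -/
def GComplete {X : Type*} (n : ℕ) (G : (Fin n → X) → ℝ) : Prop :=
  ∀ x : ℕ → X, IsGCauchy n G x → ∃ l, GTendsto n G x l

section Aux

variable {X : Type*} {n : ℕ} {hn : 3 ≤ n} {G : (Fin n → X) → ℝ}

lemma aux_tailRep_self (x : X) : tailRep n x x = fun _ => x := by
  funext i; unfold tailRep; split <;> rfl

lemma aux_G_tailRep_self (hG : IsGenNMetric n hn G) (x : X) : G (tailRep n x x) = 0 := by
  rw [aux_tailRep_self, hG.g1]

/-- Triangle inequality for `tailRep`. -/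
lemma aux_tri (hG : IsGenNMetric n hn G) (x z w : X) :
    G (tailRep n x z) ≤ G (tailRep n x w) + G (tailRep n w z) := by
  have h5 : G (tailRep n x z) ≤ G (tailRep n (tailRep n x z ⟨0, by omega⟩) w) +
      G (Function.update (tailRep n x z) ⟨0, by omega⟩ w) := hG.g5 (tailRep n x z) w
  have h0 : tailRep n x z ⟨0, by omega⟩ = x := by simp [tailRep]
  have hupd : Function.update (tailRep n x z) ⟨0, by omega⟩ w = tailRep n w z := by
    funext i
    by_cases h : (i : ℕ) = 0 <;>
      simp [Function.update_apply, tailRep, Fin.ext_iff, h]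
  rw [h0, hupd] at h5
  exact h5

/-- Splitting a general tuple into `tailRep`s at a common point `w`. -/
lemma aux_split (hG : IsGenNMetric n hn G) (w : X) :
    ∀ s : Finset (Fin n), ∀ f : Fin n → X, (∀ i ∉ s, f i = w) →
      G f ≤ ∑ i ∈ s, G (tailRep n (f i) w) := by
  intro s
  induction s using Finset.induction_on with
  | empty =>
    intro f hf
    have : f = fun _ => w := funext fun i => hf i (by simp)
    rw [this, hG.g1]; simp
  | @insert a s' ha ih =>
    intro f hf
    set z0 : Fin n := ⟨0, by omega⟩ with hz0
    set π : Equiv.Perm (Fin n) := Equiv.swap z0 a with hπ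
    have hperm : G (f ∘ π) = G f := hG.g4 f π
    have h5 : G (f ∘ π) ≤ G (tailRep n ((f ∘ π) z0) w) +
        G (Function.update (f ∘ π) z0 w) := hG.g5 (f ∘ π) w
    have h0 : (f ∘ π) z0 = f a := by simp [hπ, Equiv.swap_apply_left]
    have hupd : Function.update (f ∘ π) z0 w = (Function.update f a w) ∘ π := by
      funext i
      simp only [Function.comp_apply, Function.update_apply]
      by_cases h : i = z0
      · subst h; simp [hπ, Equiv.swap_apply_left]
      · have hne : π i ≠ a := by
          intro hc
          apply h
          have : π i = π z0 := by rw [hc]; simp [hπ, Equiv.swap_apply_left]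
          exact π.injective this
        simp [h, hne]
    have hupd_out : ∀ i ∉ s', Function.update f a w i = w := by
      intro i hi
      by_cases h : i = a
      · subst h; simp
      · rw [Function.update_apply, if_neg h]
        exact hf i (by simp [h, hi])
    have ih' := ih (Function.update f a w) hupd_out
    have hsum : ∑ i ∈ s', G (tailRep n (Function.update f a w i) w) =
        ∑ i ∈ s', G (tailRep n (f i) w) := by
      apply Finset.sum_congr rfl
      intro i hi
      have : i ≠ a := by rintro rfl; exact ha hi
      rw [Function.update_apply, if_neg this]
    calc G f = G (f ∘ π) := hperm.symm
      _ ≤ G (tailRep n ((f ∘ π) z0) w) + G (Function.update (f ∘ π) z0 w) := h5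
      _ = G (tailRep n (f a) w) + G ((Function.update f a w) ∘ π) := by rw [h0, hupd]
      _ = G (tailRep n (f a) w) + G (Function.update f a w) := by
          rw [hG.g4 (Function.update f a w) π]
      _ ≤ G (tailRep n (f a) w) + ∑ i ∈ s', G (tailRep n (f i) w) := by
          rw [← hsum]; exact add_le_add_right ih' _
      _ = ∑ i ∈ insert a s', G (tailRep n (f i) w) := by rw [Finset.sum_insert ha]

end Aux

/-- iterate sequence of a contraction is `Gₙ`-Cauchy with geometric bound. -/
theorem genNMetric_iterate_cauchy {X : Type*} {n : ℕ} {hn : 3 ≤ n} {G : (Fin n → X) → ℝ}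
    (hG : IsGenNMetric n hn G) (hcomp : GComplete n G) (T : X → X)
    (k : ℝ) (hk0 : 0 ≤ k) (hk1 : k < 1)
    (hT : ∀ f : Fin n → X, G (fun i => T (f i)) ≤ k * G f) (y₀ : X) :
    IsGCauchy n G (fun m => T^[m] y₀) ∧
    ∀ m p : ℕ, m < p →
      G (tailRep n (T^[m] y₀) (T^[p] y₀)) ≤ (k ^ m / (1 - k)) * G (tailRep n y₀ (T y₀)) := by
  set y : ℕ → X := fun m => T^[m] y₀ with hy
  set d0 : ℝ := G (tailRep n y₀ (T y₀)) with hd0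
  have hd0nn : 0 ≤ d0 := hG.nonneg _
  have h1k : (0 : ℝ) < 1 - k := by linarith
  -- each tailRep contracts:
  have hTmap : ∀ x z : X, tailRep n (T x) (T z) = fun i => T (tailRep n x z i) := by
    intro x z; funext i
    by_cases h : (i : ℕ) = 0 <;> simp [tailRep, h]
  have hstep : ∀ m : ℕ, G (tailRep n (y m) (y (m + 1))) ≤ k ^ m * d0 := by
    intro m
    induction m with
    | zero => simp [hy, hd0]
    | succ m ihm =>
      have h1 : y (m + 1) = T (y m) := by simp [hy, Function.iterate_succ_apply']
      have h2 : y (m + 2) = T (y (m + 1)) := by simp [hy, Function.iterate_succ_apply']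
      rw [h1]
      calc G (tailRep n (T (y m)) (y (m + 2)))
          = G (tailRep n (T (y m)) (T (y (m + 1)))) := by rw [h2]
        _ = G (fun i => T (tailRep n (y m) (y (m + 1)) i)) := by rw [hTmap]
        _ ≤ k * G (tailRep n (y m) (y (m + 1))) := hT _
        _ ≤ k * (k ^ m * d0) := by
            exact mul_le_mul_of_nonneg_left ihm hk0
        _ = k ^ (m + 1) * d0 := by ring
  -- chain bound
  have hchain : ∀ m p : ℕ, m ≤ p →
      G (tailRep n (y m) (y p)) ≤ (∑ j ∈ Finset.Ico m p, k ^ j) * d0 := by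
    intro m p hmp
    induction p, hmp using Nat.le_induction with
    | base => simp [aux_G_tailRep_self hG]
    | succ p hmp ih =>
      calc G (tailRep n (y m) (y (p + 1)))
          ≤ G (tailRep n (y m) (y p)) + G (tailRep n (y p) (y (p + 1))) := aux_tri hG _ _ _
        _ ≤ (∑ j ∈ Finset.Ico m p, k ^ j) * d0 + k ^ p * d0 := add_le_add ih (hstep p)
        _ = (∑ j ∈ Finset.Ico m p, k ^ j + k ^ p) * d0 := by ring
        _ = (∑ j ∈ Finset.Ico m (p + 1), k ^ j) * d0 := by
            rw [Finset.sum_Ico_succ_top hmp]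
  have hgeom : ∀ m p : ℕ, m ≤ p →
      G (tailRep n (y m) (y p)) ≤ (k ^ m / (1 - k)) * d0 := by
    intro m p hmp
    refine (hchain m p hmp).trans ?_
    exact mul_le_mul_of_nonneg_right (geom_sum_Ico_le_of_lt_one hk0 hk1) hd0nn
  constructor
  · -- Cauchy
    intro ε hε
    have htend : Tendsto (fun N : ℕ => (n : ℝ) * (k ^ N / (1 - k) * d0)) atTop (nhds 0) := by
      have h := tendsto_pow_atTop_nhds_zero_of_lt_one hk0 hk1
      have := h.const_mul ((n : ℝ) * (d0 / (1 - k)))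
      simpa [mul_comm, mul_assoc, mul_left_comm, div_eq_mul_inv] using this
    have hev : ∀ᶠ N in atTop, (n : ℝ) * (k ^ N / (1 - k) * d0) < ε :=
      (htend.eventually (eventually_lt_nhds hε)).mono (fun N h => h)
    obtain ⟨N, hN⟩ := hev.exists
    refine ⟨N, fun m hm => ?_⟩
    set M : ℕ := Finset.univ.sup m with hM
    have hle : ∀ i, m i ≤ M := fun i => Finset.le_sup (Finset.mem_univ i)
    have hsplit := aux_split hG (y M) Finset.univ (fun i => y (m i)) (by simp)
    have hbound : ∀ i : Fin n, G (tailRep n (y (m i)) (y M)) ≤ k ^ N / (1 - k) * d0 := by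
      intro i
      refine (hgeom (m i) M (hle i)).trans ?_
      have h : k ^ m i ≤ k ^ N := pow_le_pow_of_le_one hk0 hk1.le (hm i)
      exact mul_le_mul_of_nonneg_right ((div_le_div_iff_of_pos_right h1k).mpr h) hd0nn
    calc G (fun i => y (m i)) ≤ ∑ i : Fin n, G (tailRep n (y (m i)) (y M)) := hsplit
      _ ≤ ∑ _i : Fin n, (k ^ N / (1 - k) * d0) := Finset.sum_le_sum fun i _ => hbound i
      _ = (n : ℝ) * (k ^ N / (1 - k) * d0) := by
          rw [Finset.sum_const, Finset.card_univ, Fintype.card_fin, nsmul_eq_mul]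
      _ < ε := hN
  · intro m p hmp
    exact hgeom m p hmp.le
end

section
/- Let S ⊂ U and D ⊂ V (U, V Banach spaces), g : S × D → ℝ and M : S × D × ℝ → ℝ bounded, τ : S × D → S, and let X = B(S) with Gₙ(ψ₁,...,ψₙ) = max_{p<q} sup_x |ψ_p(x) − ψ_q(x)| (n ≥ 3). Define T : X → X by T(ψ)(x) = sup_{y ∈ D} [g(x,y) + M(x,y,ψ(τ(x,y)))]. Suppose there exists r ∈ [0,1) such that whenever (1/(1+r))·Gₙ(ψ, Tψ, ..., Tψ) ≤ Gₙ(ψ, φ, ..., φ), one has |M(x,y,ψ(t)) − M(x,y,φ(t))| ≤ r|ψ(t) − φ(t)| for all (x,y) ∈ S × D and t ∈ S. Then the functional equation f(x) = sup_{y ∈ D}[g(x,y) + M(x,y,f(τ(x,y)))] has a unique bounded solution f ∈ X. -/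
open Filter Topology

/-- Boundedness of a real-valued function. -/
def Bdd {S : Type*} (ψ : S → ℝ) : Prop := ∃ C, ∀ x, |ψ x| ≤ C

/-- `Gₙ(ψ₁,...,ψₙ) = max_{p<q} sup_x |ψ_p x − ψ_q x|`. -/
noncomputable def GFun {S : Type*} (n : ℕ) (hn : 3 ≤ n) (f : Fin n → (S → ℝ)) : ℝ :=
  (Finset.univ.filter (fun p : Fin n × Fin n => p.1 < p.2)).sup'
    ⟨((⟨0, by omega⟩ : Fin n), (⟨1, by omega⟩ : Fin n)),
      Finset.mem_filter.mpr ⟨Finset.mem_univ _, Fin.mk_lt_mk.mpr one_pos⟩⟩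
    (fun p => ⨆ x, |f p.1 x - f p.2 x|)

/-- Sup distance between two functions. -/
noncomputable def dsup {S : Type*} (ψ φ : S → ℝ) : ℝ := ⨆ x, |ψ x - φ x|

lemma dsup_nonneg {S : Type*} (ψ φ : S → ℝ) : 0 ≤ dsup ψ φ :=
  Real.iSup_nonneg fun _ => abs_nonneg _

lemma dsup_le {S : Type*} {ψ φ : S → ℝ} {C : ℝ} (hC : 0 ≤ C)
    (h : ∀ x, |ψ x - φ x| ≤ C) : dsup ψ φ ≤ C := Real.iSup_le h hC

lemma le_dsup {S : Type*} {ψ φ : S → ℝ} (hψ : Bdd ψ) (hφ : Bdd φ) (x : S) :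
    |ψ x - φ x| ≤ dsup ψ φ := by
  obtain ⟨C1, h1⟩ := hψ; obtain ⟨C2, h2⟩ := hφ
  exact le_ciSup ⟨C1 + C2, by
    rintro v ⟨x, rfl⟩
    exact (abs_sub _ _).trans (add_le_add (h1 x) (h2 x))⟩ x

lemma dsup_comm {S : Type*} (ψ φ : S → ℝ) : dsup ψ φ = dsup φ ψ := by
  unfold dsup; simp_rw [abs_sub_comm]

lemma dsup_self {S : Type*} [Nonempty S] (ψ : S → ℝ) : dsup ψ ψ = 0 := by
  unfold dsup; simp

lemma dsup_triangle {S : Type*} {a b c : S → ℝ} (ha : Bdd a) (hb : Bdd b) (hc : Bdd c) :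
    dsup a c ≤ dsup a b + dsup b c := by
  refine dsup_le (add_nonneg (dsup_nonneg _ _) (dsup_nonneg _ _)) fun x => ?_
  exact (abs_sub_le _ _ _).trans (add_le_add (le_dsup ha hb x) (le_dsup hb hc x))

lemma GFun_tail {S : Type*} [Nonempty S] (n : ℕ) (hn : 3 ≤ n) (ψ φ : S → ℝ) :
    GFun n hn (tailRep n ψ φ) = dsup ψ φ := by
  refine le_antisymm (Finset.sup'_le _ _ ?_) ?_
  · rintro ⟨p, q⟩ hpq
    simp only [Finset.mem_filter, Finset.mem_univ, true_and] at hpq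
    by_cases hp : (p : ℕ) = 0
    · have hq : (q : ℕ) ≠ 0 := by
        have := (Fin.lt_iff_val_lt_val.mp hpq); omega
      simp only [tailRep, hp, hq, if_true, if_false, if_neg hq]
      exact le_of_eq rfl
    · have hq : (q : ℕ) ≠ 0 := by
        have := (Fin.lt_iff_val_lt_val.mp hpq); omega
      simp only [tailRep, if_neg hp, if_neg hq, sub_self, abs_zero, ciSup_const]
      exact dsup_nonneg ψ φ
  · have hmem : ((⟨0, by omega⟩ : Fin n), (⟨1, by omega⟩ : Fin n)) ∈
        (Finset.univ.filter (fun p : Fin n × Fin n => p.1 < p.2)) :=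
      Finset.mem_filter.mpr ⟨Finset.mem_univ _, Fin.mk_lt_mk.mpr one_pos⟩
    have := Finset.le_sup' (f := fun p : Fin n × Fin n =>
      ⨆ x, |tailRep n ψ φ p.1 x - tailRep n ψ φ p.2 x|) hmem
    simpa [GFun, tailRep, dsup] using this

/-- existence and uniqueness of a bounded solution of the functional
equation of dynamic programming. -/
theorem dynamicProgramming_unique_solution
    {U V : Type*} [NormedAddCommGroup U] [NormedSpace ℝ U] [CompleteSpace U]
    [NormedAddCommGroup V] [NormedSpace ℝ V] [CompleteSpace V]
    (S : Set U) (D : Set V) [Nonempty S] [Nonempty D]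
    (g : S × D → ℝ) (hg : ∃ C, ∀ p, |g p| ≤ C)
    (M : S × D × ℝ → ℝ) (hM : ∃ C, ∀ p, |M p| ≤ C)
    (τ : S × D → S) (n : ℕ) (hn : 3 ≤ n)
    (T : (S → ℝ) → (S → ℝ))
    (hTdef : ∀ (ψ : S → ℝ) (x : S), T ψ x = ⨆ y : D, (g (x, y) + M (x, y, ψ (τ (x, y)))))
    (r : ℝ) (hr0 : 0 ≤ r) (hr1 : r < 1)
    (hSuz : ∀ ψ φ : S → ℝ, Bdd ψ → Bdd φ →
      (1 / (1 + r)) * GFun n hn (tailRep n ψ (T ψ)) ≤ GFun n hn (tailRep n ψ φ) →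
      ∀ (x : S) (y : D) (t : S), |M (x, y, ψ t) - M (x, y, φ t)| ≤ r * |ψ t - φ t|) :
    ∃! f : S → ℝ, Bdd f ∧ ∀ x : S, f x = ⨆ y : D, (g (x, y) + M (x, y, f (τ (x, y)))) := by
  classical
  obtain ⟨Cg, hCg⟩ := hg
  obtain ⟨CM, hCM⟩ := hM
  have hr1' : (0:ℝ) < 1 + r := by linarith
  have hθ0 : (0:ℝ) ≤ 1 / (1 + r) := by positivity
  have hbA : ∀ (ψ : S → ℝ) (x : S),
      BddAbove (Set.range fun y : D => g (x, y) + M (x, y, ψ (τ (x, y)))) := by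
    intro ψ x
    refine ⟨Cg + CM, ?_⟩
    rintro v ⟨y, rfl⟩
    show g (x, y) + M (x, y, ψ (τ (x, y))) ≤ Cg + CM
    have h1 := abs_le.mp (hCg (x, y))
    have h2 := abs_le.mp (hCM (x, y, ψ (τ (x, y))))
    linarith [h1.2, h2.2]
  have hbT : ∀ ψ : S → ℝ, ∀ x, |T ψ x| ≤ Cg + CM := by
    intro ψ x
    rw [hTdef, abs_le]
    constructor
    · obtain ⟨y⟩ := ‹Nonempty D›
      refine le_trans ?_ (le_ciSup (hbA ψ x) y)
      have h1 := abs_le.mp (hCg (x, y))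
      have h2 := abs_le.mp (hCM (x, y, ψ (τ (x, y))))
      linarith [h1.1, h2.1]
    · refine ciSup_le fun y => ?_
      have h1 := abs_le.mp (hCg (x, y))
      have h2 := abs_le.mp (hCM (x, y, ψ (τ (x, y))))
      linarith [h1.2, h2.2]
  have hbT' : ∀ ψ : S → ℝ, Bdd (T ψ) := fun ψ => ⟨Cg + CM, hbT ψ⟩
  -- contraction from pointwise M bound
  have contra : ∀ ψ φ : S → ℝ, Bdd ψ → Bdd φ →
      (∀ (x : S) (y : D) (t : S), |M (x, y, ψ t) - M (x, y, φ t)| ≤ r * |ψ t - φ t|) →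
      dsup (T ψ) (T φ) ≤ r * dsup ψ φ := by
    intro ψ φ hψ hφ hM'
    refine dsup_le (mul_nonneg hr0 (dsup_nonneg _ _)) fun x => ?_
    rw [hTdef ψ x, hTdef φ x, abs_sub_le_iff]
    have key : ∀ y : D, |M (x, y, ψ (τ (x, y))) - M (x, y, φ (τ (x, y)))| ≤ r * dsup ψ φ :=
      fun y => (hM' x y _).trans (mul_le_mul_of_nonneg_left (le_dsup hψ hφ _) hr0)
    constructor
    · rw [sub_le_iff_le_add]
      refine ciSup_le fun y => ?_
      have h3 := (abs_le.mp (key y)).2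
      have h4 : g (x, y) + M (x, y, φ (τ (x, y))) ≤
          ⨆ y : D, (g (x, y) + M (x, y, φ (τ (x, y)))) := le_ciSup (hbA φ x) y
      linarith
    · rw [sub_le_iff_le_add]
      refine ciSup_le fun y => ?_
      have h3 := (abs_le.mp (key y)).1
      have h4 : g (x, y) + M (x, y, ψ (τ (x, y))) ≤
          ⨆ y : D, (g (x, y) + M (x, y, ψ (τ (x, y)))) := le_ciSup (hbA ψ x) y
      linarith
  have hsuz' : ∀ ψ φ : S → ℝ, Bdd ψ → Bdd φ →
      (1 / (1 + r)) * dsup ψ (T ψ) ≤ dsup ψ φ → dsup (T ψ) (T φ) ≤ r * dsup ψ φ := by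
    intro ψ φ hψ hφ hpre
    refine contra ψ φ hψ hφ (hSuz ψ φ hψ hφ ?_)
    rw [GFun_tail, GFun_tail]; exact hpre
  have step2 : ∀ ψ : S → ℝ, Bdd ψ → dsup (T ψ) (T (T ψ)) ≤ r * dsup ψ (T ψ) := by
    intro ψ hψ
    refine hsuz' ψ (T ψ) hψ (hbT' ψ) ?_
    have h0 := dsup_nonneg ψ (T ψ)
    have hle : (1:ℝ)/(1+r) ≤ 1 := by rw [div_le_one hr1']; linarith
    nlinarith
  -- the orbit
  set ψk : ℕ → S → ℝ := fun k => T^[k] (fun _ => 0) with hψk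
  have hstep : ∀ k, ψk (k+1) = T (ψk k) := fun k => Function.iterate_succ_apply' T k _
  have hbk : ∀ k, Bdd (ψk k) := by
    intro k; cases k with
    | zero => exact ⟨0, fun x => by simp [hψk]⟩
    | succ k => rw [hstep]; exact hbT' _
  set C0 : ℝ := dsup (ψk 0) (ψk 1) with hC0
  have hC00 : 0 ≤ C0 := dsup_nonneg _ _
  have hdk : ∀ k, dsup (ψk k) (ψk (k+1)) ≤ C0 * r ^ k := by
    intro k; induction k with
    | zero => simp; exact le_rfl
    | succ k ih =>
      calc dsup (ψk (k+1)) (ψk (k+1+1))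
          = dsup (T (ψk k)) (T (T (ψk k))) := by rw [hstep (k+1), hstep k]
        _ ≤ r * dsup (ψk k) (T (ψk k)) := step2 _ (hbk k)
        _ = r * dsup (ψk k) (ψk (k+1)) := by rw [← hstep k]
        _ ≤ r * (C0 * r ^ k) := mul_le_mul_of_nonneg_left ih hr0
        _ = C0 * r ^ (k+1) := by ring
  have hcau : ∀ x : S, ∃ l, Tendsto (fun k => ψk k x) atTop (𝓝 l) := by
    intro x
    refine cauchySeq_tendsto_of_complete (cauchySeq_of_le_geometric r C0 hr1 fun k => ?_)
    rw [Real.dist_eq]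
    exact (le_dsup (hbk k) (hbk (k+1)) x).trans (hdk k)
  choose f hf using hcau
  have hdistf : ∀ (k : ℕ) (x : S), dist (ψk k x) (f x) ≤ C0 * r ^ k / (1 - r) := by
    intro k x
    refine dist_le_of_le_geometric_of_tendsto r C0 hr1 (fun m => ?_) (hf x) k
    rw [Real.dist_eq]
    exact (le_dsup (hbk m) (hbk (m+1)) x).trans (hdk m)
  have hbf : Bdd f := by
    refine ⟨Cg + CM, fun x => ?_⟩
    have h1 : Tendsto (fun k : ℕ => ψk (k+1) x) atTop (𝓝 (f x)) :=
      (hf x).comp (tendsto_add_atTop_nat 1)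
    refine le_of_tendsto h1.abs (Filter.Eventually.of_forall fun k => ?_)
    rw [hstep k]; exact hbT _ x
  have hkf : ∀ k, dsup (ψk k) f ≤ C0 * r ^ k / (1 - r) := fun k =>
    dsup_le (div_nonneg (mul_nonneg hC00 (pow_nonneg hr0 k)) (by linarith)) fun x => by
      rw [← Real.dist_eq]; exact hdistf k x
  have htend : Tendsto (fun k => dsup (ψk k) f) atTop (𝓝 0) := by
    refine squeeze_zero (fun k => dsup_nonneg _ _) hkf ?_
    have h2 : Tendsto (fun k : ℕ => C0 / (1 - r) * r ^ k) atTop (𝓝 0) := by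
      simpa using (tendsto_pow_atTop_nhds_zero_of_lt_one hr0 hr1).const_mul (C0 / (1 - r))
    exact h2.congr fun k => by ring
  -- Suzuki alternative
  have halt : ∀ k : ℕ, (1/(1+r)) * dsup (ψk k) (T (ψk k)) ≤ dsup (ψk k) f ∨
      (1/(1+r)) * dsup (ψk (k+1)) (T (ψk (k+1))) ≤ dsup (ψk (k+1)) f := by
    intro k
    by_contra hcon
    push_neg at hcon
    obtain ⟨h1, h2⟩ := hcon
    rw [← hstep k] at h1
    rw [← hstep (k+1)] at h2
    have tri : dsup (ψk k) (ψk (k+1)) ≤ dsup (ψk k) f + dsup (ψk (k+1)) f := by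
      have := dsup_triangle (hbk k) hbf (hbk (k+1))
      rwa [dsup_comm f (ψk (k+1))] at this
    have hB : dsup (ψk (k+1)) (ψk (k+1+1)) ≤ r * dsup (ψk k) (ψk (k+1)) := by
      calc dsup (ψk (k+1)) (ψk (k+1+1))
          = dsup (T (ψk k)) (T (T (ψk k))) := by rw [hstep (k+1), hstep k]
        _ ≤ r * dsup (ψk k) (T (ψk k)) := step2 _ (hbk k)
        _ = r * dsup (ψk k) (ψk (k+1)) := by rw [← hstep k]
    have hθ : (1/(1+r)) * (1+r) = 1 := by field_simp
    nlinarith [mul_le_mul_of_nonneg_left hB hθ0, dsup_nonneg (ψk k) (ψk (k+1))]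
  have hbTf := hbT' f
  have hfix : ∀ x, f x = T f x := by
    have h0 : dsup f (T f) ≤ 0 := by
      refine le_of_forall_pos_le_add fun ε hε => ?_
      obtain ⟨N, hN⟩ := (Metric.tendsto_atTop.mp htend) (ε/2) (by linarith)
      have hsmall : ∀ k, N ≤ k → dsup (ψk k) f ≤ ε/2 := by
        intro k hk
        have := hN k hk
        rw [Real.dist_eq, sub_zero, abs_of_nonneg (dsup_nonneg _ _)] at this
        linarith
      have key : ∀ k, (1/(1+r)) * dsup (ψk k) (T (ψk k)) ≤ dsup (ψk k) f →
          N ≤ k → dsup f (T f) ≤ 0 + ε := by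
        intro k hpk hk
        have hc := hsuz' (ψk k) f (hbk k) hbf hpk
        have tri : dsup f (T f) ≤ dsup f (ψk (k+1)) + dsup (ψk (k+1)) (T f) :=
          dsup_triangle hbf (hbk (k+1)) hbTf
        have e1 : dsup f (ψk (k+1)) ≤ ε/2 := by
          rw [dsup_comm]; exact hsmall (k+1) (by omega)
        have e2 : dsup (ψk (k+1)) (T f) ≤ r * dsup (ψk k) f := by
          rw [hstep k]; exact hc
        have e3 : r * dsup (ψk k) f ≤ ε/2 := by
          have := hsmall k hk
          nlinarith [dsup_nonneg (ψk k) f]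
        linarith
      rcases halt N with hp | hp
      · exact key N hp le_rfl
      · exact key (N+1) hp (by omega)
    have h0' : dsup f (T f) = 0 := le_antisymm h0 (dsup_nonneg _ _)
    intro x
    have := le_dsup hbf hbTf x
    rw [h0'] at this
    have := abs_nonpos_iff.mp this
    linarith [sub_eq_zero.mp this]
  refine ⟨f, ⟨hbf, fun x => (hfix x).trans (hTdef f x)⟩, ?_⟩
  rintro h ⟨hbh, hheq⟩
  have hTf : T f = f := funext fun x => (hfix x).symm
  have hTh : T h = h := funext fun x => (hTdef h x).trans (hheq x).symm
  have hM' := hSuz f h hbf hbh (by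
    rw [GFun_tail, GFun_tail, hTf, dsup_self]
    simpa using dsup_nonneg f h)
  have hc := contra f h hbf hbh hM'
  rw [hTf, hTh] at hc
  have h0 : dsup f h = 0 := by nlinarith [dsup_nonneg f h]
  funext x
  have hle := le_dsup hbh hbf x
  rw [dsup_comm, h0] at hle
  have := abs_nonpos_iff.mp hle
  linarith [sub_eq_zero.mp this]
end
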